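/- Let G be a free group freely generated by {a, b} and H = ⟨a², b⟩. If some power aˡ (l ∈ ℤ) is conjugate in G to an element h ∈ H, then aˡ is conjugate to h by an element of H. -/

import Mathlib

namespace ConjAux

open FreeGroup




/-- Automaton run on words; state `false` is the base vertex. -/
def run : Bool → List (Bool × Bool) → Option Bool
  | s, [] => some s
  | s, (true, _) :: t => run (!s) t
  | false, (false, _) :: t => run false t
  | true, (false, _) :: _ => none

@[simp] lemma run_nil (s : Bool) : run s [] = some s := by cases s <;> rfl
@[simp] lemma run_a (s σ : Bool) (t) : run s ((true, σ) :: t) = run (!s) t := by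
  cases s <;> rfl
@[simp] lemma run_b_false (σ : Bool) (t) : run false ((false, σ) :: t) = run false t := rfl
@[simp] lemma run_b_true (σ : Bool) (t) : run true ((false, σ) :: t) = none := rfl

lemma run_append (s : Bool) (u v : List (Bool × Bool)) :
    run s (u ++ v) = (run s u).bind (fun t => run t v) := by
  induction u generalizing s with
  | nil => simp
  | cons p t ih =>
    obtain ⟨g, σ⟩ := p
    cases g
    · cases s
      · simpa using ih false
      · simp
    · simpa using ih (!s)

lemma run_invRev : ∀ (w : List (Bool × Bool)) (s t : Bool), run s w = some t →
    run t (invRev w) = some s := by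
  intro w
  induction w with
  | nil =>
    intro s t h
    simp only [run_nil, Option.some.injEq] at h
    simp [h, invRev]
  | cons p u ih =>
    intro s t h
    obtain ⟨g, σ⟩ := p
    have hinv : invRev ((g, σ) :: u) = invRev u ++ [(g, !σ)] := by
      simp [invRev]
    rw [hinv, run_append]
    cases g
    · cases s
      · rw [run_b_false] at h
        rw [ih false t h]
        rfl
      · simp at h
    · rw [run_a] at h
      rw [ih (!s) t h]
      cases s <;> rfl

lemma run_step {w₁ w₂ : List (Bool × Bool)} (h : FreeGroup.Red.Step w₁ w₂) (s t : Bool)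
    (hr : run s w₁ = some t) : run s w₂ = some t := by
  cases h with
  | @not L₁ L₂ g σ =>
    rw [run_append] at hr ⊢
    cases hL : run s L₁ with
    | none => rw [hL] at hr; simp at hr
    | some s' =>
      rw [hL] at hr
      simp only [Option.bind_some] at hr ⊢
      cases g
      · cases s'
        · simpa using hr
        · simp at hr
      · simpa using hr

lemma run_red {w₁ w₂ : List (Bool × Bool)} (h : FreeGroup.Red w₁ w₂) (s t : Bool)
    (hr : run s w₁ = some t) : run s w₂ = some t := by
  induction h with
  | refl => exact hr
  | tail _ step ih => exact run_step step s t ih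




/-- Non-cancellable adjacency relation. -/
def R (p q : Bool × Bool) : Prop := p.1 = q.1 → p.2 = q.2

lemma reduce_eq_self {w : List (Bool × Bool)} (h : List.Chain' R w) :
    FreeGroup.reduce w = w := by
  induction w with
  | nil => rfl
  | cons p u ih =>
    have hu : FreeGroup.reduce u = u := ih h.tail
    rw [FreeGroup.reduce.cons, hu]
    cases u with
    | nil => rfl
    | cons q v =>
      have hpq : R p q := (List.isChain_cons_cons.mp h).1
      have hcond : ¬(p.1 = q.1 ∧ p.2 = !q.2) := by
        rintro ⟨h1, h2⟩
        have h3 := hpq h1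
        rw [h3] at h2
        exact absurd h2.symm (Bool.not_ne_self q.2)
      dsimp only
      rw [if_neg hcond]

lemma chain_of_reduce : ∀ (w : List (Bool × Bool)), FreeGroup.reduce w = w →
    List.Chain' R w := by
  intro w
  induction w with
  | nil => intro _; exact List.isChain_nil
  | cons p u ih =>
    intro h
    rw [FreeGroup.reduce.cons] at h
    cases hu : FreeGroup.reduce u with
    | nil =>
      rw [hu] at h
      dsimp only at h
      have hun : [] = u := by injection h
      subst hun
      exact List.isChain_singleton p
    | cons q v =>
      rw [hu] at h
      dsimp only at h
      by_cases hc : p.1 = q.1 ∧ p.2 = !q.2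
      · rw [if_pos hc] at h
        exfalso
        have hlen : (FreeGroup.reduce u).length ≤ u.length :=
          (FreeGroup.reduce.red (L := u)).length_le
        rw [hu] at hlen
        have hlen2 := congrArg List.length h
        simp at hlen hlen2
        omega
      · rw [if_neg hc] at h
        have huqv : q :: v = u := by injection h
        have hru : FreeGroup.reduce u = u := by rw [hu, huqv]
        have hcu := ih hru
        subst huqv
        refine List.isChain_cons_cons.mpr ⟨?_, hcu⟩
        intro h1
        by_contra h2
        exact hc ⟨h1, by cases hp2 : p.2 <;> cases hq2 : q.2 <;> simp_all⟩

lemma reduce_tail {p : Bool × Bool} {u : List (Bool × Bool)}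
    (h : FreeGroup.reduce (p :: u) = p :: u) : FreeGroup.reduce u = u :=
  reduce_eq_self (chain_of_reduce _ h).tail


def Hacc : Subgroup (FreeGroup Bool) where
  carrier := {x | run false x.toWord = some false}
  one_mem' := by simp [FreeGroup.toWord_one]
  mul_mem' := by
    intro x y hx hy
    have hxy : x * y = FreeGroup.mk (x.toWord ++ y.toWord) := by
      rw [← FreeGroup.mul_mk, FreeGroup.mk_toWord, FreeGroup.mk_toWord]
    show run false (x * y).toWord = some false
    rw [hxy, FreeGroup.toWord_mk]
    refine run_red FreeGroup.reduce.red false false ?_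
    rw [run_append, hx]
    exact hy
  inv_mem' := by
    intro x hx
    show run false (x⁻¹).toWord = some false
    rw [FreeGroup.toWord_inv]
    exact run_invRev _ _ _ hx

lemma mem_Hacc {x : FreeGroup Bool} : x ∈ Hacc ↔ run false x.toWord = some false := Iff.rfl

lemma pow_mk (n : ℕ) :
    FreeGroup.of true ^ n = FreeGroup.mk (List.replicate n (true, true)) := by
  induction n with
  | zero => simp [FreeGroup.one_eq_mk]
  | succ k ih =>
    rw [pow_succ, ih, show FreeGroup.of true = FreeGroup.mk [(true, true)] from rfl,
      FreeGroup.mul_mk, ← List.replicate_succ']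

lemma zpow_mk (l : ℤ) : ∃ σ : Bool,
    FreeGroup.of true ^ l = FreeGroup.mk (List.replicate l.natAbs (true, σ)) := by
  cases l with
  | ofNat n =>
    exact ⟨true, by rw [Int.ofNat_eq_natCast, zpow_natCast, pow_mk]; rfl⟩
  | negSucc n =>
    refine ⟨false, ?_⟩
    rw [zpow_negSucc, pow_mk, FreeGroup.inv_mk]
    congr 1
    simp [FreeGroup.invRev]

lemma gen_sq_mem : ∀ σ : Bool, FreeGroup.mk [(true, σ), (true, σ)] ∈
    Subgroup.closure ({FreeGroup.of true ^ 2, FreeGroup.of false} : Set (FreeGroup Bool)) := by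
  have hsq : FreeGroup.of true ^ 2 = FreeGroup.mk [(true, true), (true, true)] := by
    rw [pow_mk]; rfl
  intro σ
  cases σ
  · have : FreeGroup.mk [(true, false), (true, false)] = (FreeGroup.of true ^ 2)⁻¹ := by
      rw [hsq, FreeGroup.inv_mk]
      congr 1
    rw [this]
    exact inv_mem (Subgroup.subset_closure (by simp))
  · rw [← hsq]
    exact Subgroup.subset_closure (by simp)

lemma gen_b_mem : ∀ σ : Bool, FreeGroup.mk [(false, σ)] ∈
    Subgroup.closure ({FreeGroup.of true ^ 2, FreeGroup.of false} : Set (FreeGroup Bool)) := by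
  intro σ
  cases σ
  · have : FreeGroup.mk [(false, false)] = (FreeGroup.of false)⁻¹ := by
      rw [show FreeGroup.of false = FreeGroup.mk [(false, true)] from rfl, FreeGroup.inv_mk]
      congr 1
    rw [this]
    exact inv_mem (Subgroup.subset_closure (by simp))
  · exact Subgroup.subset_closure (by right; rfl)

lemma mem_closure_of_run : ∀ (n : ℕ) (w : List (Bool × Bool)), w.length ≤ n →
    FreeGroup.reduce w = w → run false w = some false →
    FreeGroup.mk w ∈
      Subgroup.closure ({FreeGroup.of true ^ 2, FreeGroup.of false} : Set (FreeGroup Bool)) := by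
  intro n
  induction n with
  | zero =>
    intro w hlen _ _
    have : w = [] := List.eq_nil_of_length_eq_zero (Nat.le_zero.mp hlen)
    subst this
    rw [← FreeGroup.one_eq_mk]
    exact one_mem _
  | succ n ih =>
    intro w hlen hred hrun
    cases w with
    | nil =>
      rw [← FreeGroup.one_eq_mk]
      exact one_mem _
    | cons p t =>
      obtain ⟨g, σ⟩ := p
      cases g with
      | false =>
        rw [run_b_false] at hrun
        have hsplit : FreeGroup.mk ((false, σ) :: t) = FreeGroup.mk [(false, σ)] * FreeGroup.mk t := by
          rw [FreeGroup.mul_mk]; rfl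
        rw [hsplit]
        exact mul_mem (gen_b_mem σ)
          (ih t (by simp at hlen; omega) (reduce_tail hred) hrun)
      | true =>
        rw [run_a] at hrun
        cases t with
        | nil => simp at hrun
        | cons q t' =>
          obtain ⟨g', τ⟩ := q
          cases g' with
          | false => simp at hrun
          | true =>
            rw [run_a] at hrun
            simp only [Bool.not_true, Bool.not_not] at hrun
            have hστ : σ = τ := (List.isChain_cons_cons.mp (chain_of_reduce _ hred)).1 rfl
            subst hστ
            have hsplit : FreeGroup.mk ((true, σ) :: (true, σ) :: t')
                = FreeGroup.mk [(true, σ), (true, σ)] * FreeGroup.mk t' := by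
              rw [FreeGroup.mul_mk]; rfl
            rw [hsplit]
            have hlt' : t'.length ≤ n := by simp at hlen; omega
            exact mul_mem (gen_sq_mem σ)
              (ih t' hlt' (reduce_tail (reduce_tail hred)) hrun)

lemma acc_le_closure : Hacc ≤
    Subgroup.closure ({FreeGroup.of true ^ 2, FreeGroup.of false} : Set (FreeGroup Bool)) := by
  intro x hx
  rw [← FreeGroup.mk_toWord (x := x)]
  exact mem_closure_of_run _ _ le_rfl (FreeGroup.reduce_toWord x) hx

lemma closure_le_acc :
    Subgroup.closure ({FreeGroup.of true ^ 2, FreeGroup.of false} : Set (FreeGroup Bool)) ≤ Hacc := by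
  rw [Subgroup.closure_le]
  rintro x hx
  simp only [Set.mem_insert_iff, Set.mem_singleton_iff] at hx
  rcases hx with rfl | rfl
  · show run false (FreeGroup.of true ^ 2).toWord = some false
    rw [pow_mk, FreeGroup.toWord_mk, FreeGroup.reduce_replicate]
    rfl
  · show run false (FreeGroup.of false).toWord = some false
    rfl

lemma key : ∀ (n : ℕ) (x : FreeGroup Bool) (l : ℤ), x.toWord.length ≤ n → l ≠ 0 →
    (x⁻¹ * FreeGroup.of true ^ l * x) ∈ Hacc →
    ∃ m : ℤ, (FreeGroup.of true ^ m * x) ∈ Hacc := by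
  intro n
  induction n with
  | zero =>
    intro x l hlen _ _
    have hx1 : x = 1 := by
      rw [← FreeGroup.mk_toWord (x := x),
        List.eq_nil_of_length_eq_zero (Nat.le_zero.mp hlen), ← FreeGroup.one_eq_mk]
    refine ⟨0, ?_⟩
    rw [zpow_zero, one_mul, hx1]
    exact one_mem _
  | succ n ih =>
    intro x l hlen hl hmem
    cases hw : x.toWord with
    | nil =>
      have hx1 : x = 1 := by
        rw [← FreeGroup.mk_toWord (x := x), hw, ← FreeGroup.one_eq_mk]
      refine ⟨0, ?_⟩
      rw [zpow_zero, one_mul, hx1]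
      exact one_mem _
    | cons p t =>
      obtain ⟨g, σ⟩ := p
      have hredw : FreeGroup.reduce ((g, σ) :: t) = (g, σ) :: t := by
        rw [← hw]; exact FreeGroup.reduce_toWord x
      cases g with
      | true =>
        set x' := FreeGroup.mk t with hx'def
        set ε : ℤ := if σ then 1 else -1 with hεdef
        have hc : FreeGroup.mk [(true, σ)] = FreeGroup.of true ^ ε := by
          cases σ
          · show FreeGroup.mk [(true, false)] = FreeGroup.of true ^ (-1 : ℤ)
            rw [zpow_neg_one, show FreeGroup.of true = FreeGroup.mk [(true, true)] from rfl,
              FreeGroup.inv_mk]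
            congr 1
          · show FreeGroup.mk [(true, true)] = FreeGroup.of true ^ (1 : ℤ)
            rw [zpow_one]; rfl
        have hx : x = FreeGroup.of true ^ ε * x' := by
          rw [← hc, hx'def, FreeGroup.mul_mk, show [(true, σ)] ++ t = (true, σ) :: t from rfl,
            ← hw, FreeGroup.mk_toWord]
        have ht : x'.toWord = t := by
          rw [hx'def, FreeGroup.toWord_mk, reduce_tail hredw]
        have hmem' : (x'⁻¹ * FreeGroup.of true ^ l * x') ∈ Hacc := by
          have heq : x'⁻¹ * FreeGroup.of true ^ l * x'
              = x⁻¹ * FreeGroup.of true ^ l * x := by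
            rw [hx]
            group
          rw [heq]
          exact hmem
        obtain ⟨m, hm⟩ := ih x' l (by rw [ht]; rw [hw] at hlen; simp at hlen; omega) hl hmem'
        refine ⟨m - ε, ?_⟩
        have heq2 : FreeGroup.of true ^ (m - ε) * x = FreeGroup.of true ^ m * x' := by
          rw [hx, ← mul_assoc, ← zpow_add, sub_add_cancel]
        rw [heq2]
        exact hm
      | false =>
        refine ⟨0, ?_⟩
        rw [zpow_zero, one_mul]
        obtain ⟨σ', hz⟩ := zpow_mk l
        obtain ⟨k, hk⟩ : ∃ k, l.natAbs = k + 1 := by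
          have := Int.natAbs_ne_zero.mpr hl
          exact ⟨l.natAbs - 1, by omega⟩
        rw [hk] at hz
        have hxmk : x = FreeGroup.mk ((false, σ) :: t) := by rw [← hw, FreeGroup.mk_toWord]
        have hinvrev : FreeGroup.invRev ((false, σ) :: t)
            = FreeGroup.invRev t ++ [(false, !σ)] := by
          simp [FreeGroup.invRev]
        have hbig : x⁻¹ * FreeGroup.of true ^ l * x
            = FreeGroup.mk (FreeGroup.invRev ((false, σ) :: t)
                ++ (List.replicate (k + 1) (true, σ') ++ (false, σ) :: t)) := by
          rw [hxmk, hz, FreeGroup.inv_mk, FreeGroup.mul_mk, FreeGroup.mul_mk,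
            List.append_assoc]
        have hred1 : FreeGroup.reduce (FreeGroup.invRev ((false, σ) :: t))
            = FreeGroup.invRev ((false, σ) :: t) := by
          rw [FreeGroup.reduce_invRev, hredw]
        have hchain : List.Chain' R (FreeGroup.invRev ((false, σ) :: t)
            ++ (List.replicate (k + 1) (true, σ') ++ (false, σ) :: t)) := by
          rw [show List.Chain' R _ = List.IsChain R _ from rfl, List.isChain_append]
          refine ⟨chain_of_reduce _ hred1, ?_, ?_⟩
          · rw [List.isChain_append]
            refine ⟨chain_of_reduce _ (FreeGroup.reduce_replicate _ _),
              chain_of_reduce _ hredw, ?_⟩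
            intro p hp q hq
            have hpmem : p ∈ List.replicate (k + 1) (true, σ') :=
              List.mem_of_mem_getLast? hp
            have hp' : p = (true, σ') := List.eq_of_mem_replicate hpmem
            have hq' : q = (false, σ) := by
              simp only [List.head?_cons, Option.mem_def, Option.some.injEq] at hq
              exact hq.symm
            intro habs
            rw [hp', hq'] at habs
            simp at habs
          · intro p hp q hq
            rw [hinvrev, List.getLast?_concat] at hp
            have hp' : p = (false, !σ) := by
              simp only [Option.mem_def, Option.some.injEq] at hp
              exact hp.symm
            have hq' : q = (true, σ') := by
              rw [List.replicate_succ] at hq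
              simp only [List.cons_append, List.head?_cons, Option.mem_def,
                Option.some.injEq] at hq
              exact hq.symm
            intro habs
            rw [hp', hq'] at habs
            simp at habs
        have htow : (x⁻¹ * FreeGroup.of true ^ l * x).toWord
            = FreeGroup.invRev ((false, σ) :: t)
              ++ (List.replicate (k + 1) (true, σ') ++ (false, σ) :: t) := by
          rw [hbig, FreeGroup.toWord_mk, reduce_eq_self hchain]
        rw [mem_Hacc, htow, run_append] at hmem
        cases h1 : run false (FreeGroup.invRev ((false, σ) :: t)) with
        | none => rw [h1] at hmem; simp at hmem
        | some s₁ =>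
          rw [h1] at hmem
          simp only [Option.bind_some] at hmem
          rw [run_append] at hmem
          cases h2 : run s₁ (List.replicate (k + 1) (true, σ')) with
          | none => rw [h2] at hmem; simp at hmem
          | some s₂ =>
            rw [h2] at hmem
            simp only [Option.bind_some] at hmem
            cases s₂ with
            | true => simp at hmem
            | false =>
              rw [mem_Hacc, hw]
              exact hmem

end ConjAux

theorem conj_power_of_a_into_H
    (a b : FreeGroup Bool) (ha : a = FreeGroup.of true) (hb : b = FreeGroup.of false)
    (H : Subgroup (FreeGroup Bool)) (hH : H = Subgroup.closure {a ^ 2, b})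
    (l : ℤ) (h : FreeGroup Bool) (hh : h ∈ H)
    (hconj : ∃ x : FreeGroup Bool, a ^ l = x * h * x⁻¹) :
    ∃ y ∈ H, a ^ l = y * h * y⁻¹ := by
  subst ha hb hH
  obtain ⟨x, hx⟩ := hconj
  have hxh : x⁻¹ * FreeGroup.of true ^ l * x = h := by
    rw [hx]; group
  rcases eq_or_ne l 0 with rfl | hl
  · have h1 : h = 1 := by
      rw [← hxh, zpow_zero]
      group
    refine ⟨1, one_mem _, ?_⟩
    rw [h1, zpow_zero]
    group
  · have hmem : x⁻¹ * FreeGroup.of true ^ l * x ∈ ConjAux.Hacc := by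
      rw [hxh]
      exact ConjAux.closure_le_acc hh
    obtain ⟨m, hm⟩ := ConjAux.key x.toWord.length x l le_rfl hl hmem
    refine ⟨FreeGroup.of true ^ m * x, ConjAux.acc_le_closure hm, ?_⟩
    rw [← hxh]
    group
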